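/- Let x₁, x₂, x₃, y₁, y₂, y₃ be positive real numbers, and set X = 2x₁x₂ + 2x₁x₃ + 2x₂x₃ − x₁² − x₂² − x₃², Y = 2y₁y₂ + 2y₁y₃ + 2y₂y₃ − y₁² − y₂² − y₃², and Z = x₁(y₂+y₃−y₁) + x₂(y₁+y₃−y₂) + x₃(y₁+y₂−y₃). If X ≥ 0, Y ≥ 0, and Z ≥ 0, then X·Y·Z < 32·x₁x₂x₃·y₁y₂y₃. -/
import Mathlib

/-- Key algebraic lemma (all-acute case): for positive `u i`, `v i`,
`(Σ uᵢuⱼ)(Σ uᵢvᵢ²(vⱼ+vₖ)) > Π(vᵢ+vⱼ) · u₁u₂u₃`. -/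
lemma lemB (u₁ u₂ u₃ v₁ v₂ v₃ : ℝ)
    (hu₁ : 0 < u₁) (hu₂ : 0 < u₂) (hu₃ : 0 < u₃)
    (hv₁ : 0 < v₁) (hv₂ : 0 < v₂) (hv₃ : 0 < v₃) :
    (v₁+v₂)*(v₂+v₃)*(v₃+v₁)*(u₁*u₂*u₃) <
      (u₁*u₂+u₁*u₃+u₂*u₃) *
        (u₁*v₁^2*(v₂+v₃) + u₂*v₂^2*(v₃+v₁) + u₃*v₃^2*(v₁+v₂)) := by
  have hsq : 0 ≤ u₂*v₂*(u₁*v₁ - u₃*v₃)^2 := by positivity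
  have m1 : 0 < u₂*u₃^2*v₁*v₃^2 := by positivity
  have m2 : 0 < u₂^2*u₃*v₂^2*v₃ := by positivity
  have m3 : 0 < u₂^2*u₃*v₁*v₂^2 := by positivity
  have m4 : 0 < u₁*u₃^2*v₂*v₃^2 := by positivity
  have m5 : 0 < u₁*u₃^2*v₁*v₃^2 := by positivity
  have m6 : 0 < u₁*u₂^2*v₂^2*v₃ := by positivity
  have m7 : 0 < u₁*u₂^2*v₁*v₂^2 := by positivity
  have m8 : 0 < u₁^2*u₃*v₁^2*v₃ := by positivity
  have m9 : 0 < u₁^2*u₃*v₁^2*v₂ := by positivity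
  have m10 : 0 < u₁^2*u₂*v₁^2*v₃ := by positivity
  nlinarith [hsq, m1, m2, m3, m4, m5, m6, m7, m8, m9, m10]

/-- The obtuse/right case: if `y₁ + y₂ ≤ y₃` then the conclusion holds
(only uses `X ≥ 0`, `Y ≥ 0` and positivity). -/
lemma auxA (x₁ x₂ x₃ y₁ y₂ y₃ : ℝ)
    (hx₁ : 0 < x₁) (hx₂ : 0 < x₂) (hx₃ : 0 < x₃)
    (hy₁ : 0 < y₁) (hy₂ : 0 < y₂) (hy₃ : 0 < y₃)
    (hX : 0 ≤ 2*x₁*x₂ + 2*x₁*x₃ + 2*x₂*x₃ - x₁^2 - x₂^2 - x₃^2)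
    (hY : 0 ≤ 2*y₁*y₂ + 2*y₁*y₃ + 2*y₂*y₃ - y₁^2 - y₂^2 - y₃^2)
    (h : y₁ + y₂ - y₃ ≤ 0) :
    (2*x₁*x₂ + 2*x₁*x₃ + 2*x₂*x₃ - x₁^2 - x₂^2 - x₃^2) *
      (2*y₁*y₂ + 2*y₁*y₃ + 2*y₂*y₃ - y₁^2 - y₂^2 - y₃^2) *
      (x₁*(y₂ + y₃ - y₁) + x₂*(y₁ + y₃ - y₂) + x₃*(y₁ + y₂ - y₃)) <
      32 * (x₁*x₂*x₃) * (y₁*y₂*y₃) := by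
  have hu₁ : 0 < y₂ + y₃ - y₁ := by linarith
  have hu₂ : 0 < y₁ + y₃ - y₂ := by linarith
  rcases eq_or_lt_of_le h with h0 | hneg
  · -- y₃ = y₁ + y₂
    have hy3 : y₃ = y₁ + y₂ := by linarith
    subst hy3
    have key : 0 < x₁*y₂*(x₂+x₃-x₁)^2 + x₂*y₁*(x₁+x₃-x₂)^2 := by
      have hab : 0 < x₁*y₂ + x₂*y₁ := by positivity
      have hc : 0 < x₁*x₂*y₁*y₂*x₃^2 := by positivity
      nlinarith [sq_nonneg (x₁*y₂*(x₂+x₃-x₁) - x₂*y₁*(x₁+x₃-x₂)), hab, hc]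
    have final : 0 < 8*y₁*y₂*(x₁*y₂*(x₂+x₃-x₁)^2 + x₂*y₁*(x₁+x₃-x₂)^2) := by
      have : (0:ℝ) < 8*y₁*y₂ := by positivity
      exact mul_pos this key
    nlinarith [final]
  · -- y₁ + y₂ < y₃
    have ht1 : 0 < 8*(x₁*x₂*x₃)*y₃*(y₁+y₂-y₃)^2 := by
      have h2 : 0 < (y₁+y₂-y₃)^2 := by nlinarith
      have h3 : (0:ℝ) < 8*(x₁*x₂*x₃)*y₃ := by positivity
      exact mul_pos h3 h2
    have ht2 : 0 ≤ (2*y₁*y₂ + 2*y₁*y₃ + 2*y₂*y₃ - y₁^2 - y₂^2 - y₃^2) *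
        (x₁*(y₂+y₃-y₁)*(x₂+x₃-x₁)^2) :=
      mul_nonneg hY (by positivity)
    have ht2' : 0 ≤ (2*y₁*y₂ + 2*y₁*y₃ + 2*y₂*y₃ - y₁^2 - y₂^2 - y₃^2) *
        (x₂*(y₁+y₃-y₂)*(x₁+x₃-x₂)^2) :=
      mul_nonneg hY (by positivity)
    have ht3 : 0 ≤ (2*y₁*y₂ + 2*y₁*y₃ + 2*y₂*y₃ - y₁^2 - y₂^2 - y₃^2) *
        ((-(y₁+y₂-y₃)) * x₃ * (2*x₁*x₂ + 2*x₁*x₃ + 2*x₂*x₃ - x₁^2 - x₂^2 - x₃^2)) :=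
      mul_nonneg hY (mul_nonneg (mul_nonneg (by linarith) hx₃.le) hX)
    linarith [ht1, ht2, ht2', ht3]

theorem hard_lemma (x₁ x₂ x₃ y₁ y₂ y₃ : ℝ)
    (hx₁ : 0 < x₁) (hx₂ : 0 < x₂) (hx₃ : 0 < x₃)
    (hy₁ : 0 < y₁) (hy₂ : 0 < y₂) (hy₃ : 0 < y₃)
    (hX : 0 ≤ 2*x₁*x₂ + 2*x₁*x₃ + 2*x₂*x₃ - x₁^2 - x₂^2 - x₃^2)
    (hY : 0 ≤ 2*y₁*y₂ + 2*y₁*y₃ + 2*y₂*y₃ - y₁^2 - y₂^2 - y₃^2)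
    (hZ : 0 ≤ x₁*(y₂ + y₃ - y₁) + x₂*(y₁ + y₃ - y₂) + x₃*(y₁ + y₂ - y₃)) :
    (2*x₁*x₂ + 2*x₁*x₃ + 2*x₂*x₃ - x₁^2 - x₂^2 - x₃^2) *
      (2*y₁*y₂ + 2*y₁*y₃ + 2*y₂*y₃ - y₁^2 - y₂^2 - y₃^2) *
      (x₁*(y₂ + y₃ - y₁) + x₂*(y₁ + y₃ - y₂) + x₃*(y₁ + y₂ - y₃)) <
      32 * (x₁*x₂*x₃) * (y₁*y₂*y₃) := by
  rcases le_or_gt (y₁ + y₂ - y₃) 0 with h | hu₃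
  · have := auxA x₁ x₂ x₃ y₁ y₂ y₃ hx₁ hx₂ hx₃ hy₁ hy₂ hy₃ hX hY h
    linarith [this]
  rcases le_or_gt (y₂ + y₃ - y₁) 0 with h | hu₁
  · have := auxA x₂ x₃ x₁ y₂ y₃ y₁ hx₂ hx₃ hx₁ hy₂ hy₃ hy₁ (by linarith) (by linarith)
      (by linarith)
    linarith [this]
  rcases le_or_gt (y₁ + y₃ - y₂) 0 with h | hu₂
  · have := auxA x₁ x₃ x₂ y₁ y₃ y₂ hx₁ hx₃ hx₂ hy₁ hy₃ hy₂ (by linarith) (by linarith)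
      (by linarith)
    linarith [this]
  rcases le_or_gt (x₁ + x₂ - x₃) 0 with h | hv₃
  · have := auxA y₁ y₂ y₃ x₁ x₂ x₃ hy₁ hy₂ hy₃ hx₁ hx₂ hx₃ hY hX h
    linarith [this]
  rcases le_or_gt (x₂ + x₃ - x₁) 0 with h | hv₁
  · have := auxA y₂ y₃ y₁ x₂ x₃ x₁ hy₂ hy₃ hy₁ hx₂ hx₃ hx₁ (by linarith) (by linarith)
      (by linarith)
    linarith [this]
  rcases le_or_gt (x₁ + x₃ - x₂) 0 with h | hv₂
  · have := auxA y₁ y₃ y₂ x₁ x₃ x₂ hy₁ hy₃ hy₂ hx₁ hx₃ hx₂ (by linarith) (by linarith)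
      (by linarith)
    linarith [this]
  · have hB := lemB (y₂ + y₃ - y₁) (y₁ + y₃ - y₂) (y₁ + y₂ - y₃)
      (x₂ + x₃ - x₁) (x₁ + x₃ - x₂) (x₁ + x₂ - x₃) hu₁ hu₂ hu₃ hv₁ hv₂ hv₃
    linarith [hB]
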